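/- Suppose ‖·‖ is any unitary similarity invariant norm on n×n complex matrices and k = n − 1. Then for every n×n density matrix X, d(X, D_{n,n−1}) ≤ d((1/n)·I_n, D_{n,n−1}). -/

import Mathlib

open Matrix BigOperators Finset
open scoped ComplexOrder

/-- The singular values of a square complex matrix. -/
noncomputable def singVals {n : ℕ} (A : Matrix (Fin n) (Fin n) ℂ) : Fin n → ℝ :=
  fun i => Real.sqrt ((Matrix.isHermitian_conjTranspose_mul_self A).eigenvalues i)

/-- The trace norm: the sum of singular values. -/
noncomputable def traceNorm {n : ℕ} (A : Matrix (Fin n) (Fin n) ℂ) : ℝ :=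
  ∑ i, singVals A i

/-- A density matrix: positive semidefinite with trace 1. -/
def IsDensity {n : ℕ} (X : Matrix (Fin n) (Fin n) ℂ) : Prop :=
  X.PosSemidef ∧ X.trace = 1

/-- Distance from `X` to the set of density matrices of rank at most `k`,
measured via a given norm `N`. -/
noncomputable def distToLowRank {n : ℕ} (N : Matrix (Fin n) (Fin n) ℂ → ℝ) (k : ℕ)
    (X : Matrix (Fin n) (Fin n) ℂ) : ℝ :=
  sInf {t | ∃ Y : Matrix (Fin n) (Fin n) ℂ, IsDensity Y ∧ Y.rank ≤ k ∧ t = N (X - Y)}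

variable {n : ℕ}

lemma aux_trace_conj (W D : Matrix (Fin n) (Fin n) ℂ)
    (hW : W ∈ Matrix.unitaryGroup (Fin n) ℂ) :
    (W * D * star W).trace = D.trace := by
  rw [Matrix.trace_mul_cycle, Matrix.mem_unitaryGroup_iff'.mp hW, one_mul]

lemma aux_perm_star (σ : Equiv.Perm (Fin n)) :
    star ((Equiv.toPEquiv σ).toMatrix : Matrix (Fin n) (Fin n) ℂ)
      = (Equiv.toPEquiv σ.symm).toMatrix := by
  ext i j
  simp only [Matrix.star_apply, PEquiv.toMatrix_apply, Equiv.toPEquiv_apply,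
    Option.mem_def, Option.some_inj]
  by_cases h : σ j = i
  · subst h
    simp
  · have h2 : ¬ σ.symm i = j := fun hh => h (by rw [← hh]; simp)
    have h3 : ¬ i = σ j := fun hh => h hh.symm
    simp [h, h2, h3]

lemma aux_perm_mem (σ : Equiv.Perm (Fin n)) :
    ((Equiv.toPEquiv σ).toMatrix : Matrix (Fin n) (Fin n) ℂ)
      ∈ Matrix.unitaryGroup (Fin n) ℂ := by
  rw [Matrix.mem_unitaryGroup_iff, aux_perm_star,
    ← PEquiv.toMatrix_trans, ← Equiv.toPEquiv_trans, Equiv.self_trans_symm,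
    Equiv.toPEquiv_refl, PEquiv.toMatrix_refl]

lemma aux_perm_conj (σ : Equiv.Perm (Fin n)) (d : Fin n → ℂ) :
    ((Equiv.toPEquiv σ).toMatrix : Matrix (Fin n) (Fin n) ℂ)ᴴ * Matrix.diagonal d
        * (Equiv.toPEquiv σ).toMatrix
      = Matrix.diagonal (d ∘ σ.symm) := by
  rw [← Matrix.star_eq_conjTranspose, aux_perm_star,
    PEquiv.toMatrix_toPEquiv_mul, PEquiv.mul_toMatrix_toPEquiv,
    Matrix.submatrix_submatrix, Function.comp_id, Function.id_comp,
    Matrix.submatrix_diagonal_equiv]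

lemma density_sum_eig {A : Matrix (Fin n) (Fin n) ℂ} (hA : A.PosSemidef) (ht : A.trace = 1) :
    ∑ i, hA.1.eigenvalues i = 1 := by
  have h2 : A.trace = ∑ i, ((hA.1.eigenvalues i : ℝ) : ℂ) := by
    conv_lhs => rw [hA.1.spectral_theorem, Unitary.conjStarAlgAut_apply]
    rw [aux_trace_conj _ _ (Matrix.IsHermitian.eigenvectorUnitary hA.1).2,
      Matrix.trace_diagonal]
    norm_num
  rw [ht] at h2
  exact_mod_cast h2.symm


theorem stmt_6 (n : ℕ) (hn : 1 ≤ n)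
    (N : Matrix (Fin n) (Fin n) ℂ → ℝ)
    (hN_tri : ∀ A B, N (A + B) ≤ N A + N B)
    (hN_smul : ∀ (c : ℂ) A, N (c • A) = ‖c‖ * N A)
    (hN_def : ∀ A, N A = 0 ↔ A = 0)
    (hN_usi : ∀ (A U : Matrix (Fin n) (Fin n) ℂ),
      U ∈ Matrix.unitaryGroup (Fin n) ℂ → N (Uᴴ * A * U) = N A)
    (X : Matrix (Fin n) (Fin n) ℂ) (hX : IsDensity X) :
    distToLowRank N (n - 1) X
      ≤ distToLowRank N (n - 1) ((1 / (n : ℂ)) • (1 : Matrix (Fin n) (Fin n) ℂ)) := by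
  classical
  have hNnonneg : ∀ A, 0 ≤ N A := by
    intro A
    have h0 : N (0 : Matrix (Fin n) (Fin n) ℂ) = 0 := (hN_def 0).mpr rfl
    have h1 : N ((-1 : ℂ) • A) = N A := by rw [hN_smul]; simp
    have h2 := hN_tri A ((-1 : ℂ) • A)
    have h3 : A + (-1 : ℂ) • A = 0 := by simp
    rw [h3, h0, h1] at h2
    linarith
  by_cases hE : ∃ Y : Matrix (Fin n) (Fin n) ℂ, IsDensity Y ∧ Y.rank ≤ n - 1
  · have hbdd : BddBelow {t | ∃ Y : Matrix (Fin n) (Fin n) ℂ,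
        IsDensity Y ∧ Y.rank ≤ n - 1 ∧ t = N (X - Y)} := by
      refine ⟨0, ?_⟩
      rintro t ⟨Y, -, -, rfl⟩
      exact hNnonneg _
    obtain ⟨Y₀, hY₀d, hY₀r⟩ := hE
    have hne2 : {t | ∃ Y : Matrix (Fin n) (Fin n) ℂ, IsDensity Y ∧ Y.rank ≤ n - 1 ∧
        t = N ((1 / (n : ℂ)) • 1 - Y)}.Nonempty := ⟨_, Y₀, hY₀d, hY₀r, rfl⟩
    unfold distToLowRank
    refine le_csInf hne2 ?_
    rintro t ⟨Y, hY, hYrank, rfl⟩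
    -- setup
    haveI : NeZero n := ⟨by omega⟩
    have hXps := hX.1
    have hYps := hY.1
    have hXh : X.IsHermitian := hXps.1
    have hYh : Y.IsHermitian := hYps.1
    set e : Fin n → ℝ := hXh.eigenvalues with he
    set f : Fin n → ℝ := hYh.eigenvalues with hf
    obtain ⟨i0, -, hi0⟩ := Finset.exists_min_image Finset.univ e ⟨default, Finset.mem_univ _⟩
    have hsum_e : ∑ i, e i = 1 := density_sum_eig hXps hX.2
    have hsum_f : ∑ i, f i = 1 := density_sum_eig hYps hY.2
    have he0 : ∀ i, 0 ≤ e i := fun i => hXps.eigenvalues_nonneg i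
    have hf0 : ∀ i, 0 ≤ f i := fun i => hYps.eigenvalues_nonneg i
    obtain ⟨j0, hj0⟩ : ∃ j, f j = 0 := by
      by_contra hcon
      push_neg at hcon
      have hr := hYh.rank_eq_card_non_zero_eigs
      rw [Fintype.card_congr (Equiv.subtypeUnivEquiv hcon), Fintype.card_fin] at hr
      omega
    set lam : ℝ := e i0 with hlam
    set c : ℝ := n * lam with hc
    have hc0 : 0 ≤ c := mul_nonneg (Nat.cast_nonneg n) (he0 i0)
    have hc1 : c ≤ 1 := by
      have h1 : c = ∑ _i : Fin n, lam := by
        rw [Finset.sum_const, Finset.card_univ, Fintype.card_fin, nsmul_eq_mul]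
      have h2 : (∑ _i : Fin n, lam) ≤ ∑ i, e i :=
        Finset.sum_le_sum fun i _ => hi0 i (Finset.mem_univ i)
      rw [hsum_e] at h2
      linarith [h1 ▸ h2]
    set σ : Equiv.Perm (Fin n) := Equiv.swap i0 j0 with hσ
    set g : Fin n → ℝ := fun i => e i - lam + c * f (σ i) with hg
    have hg0 : ∀ i, 0 ≤ g i := fun i =>
      add_nonneg (sub_nonneg.mpr (hi0 i (Finset.mem_univ i))) (mul_nonneg hc0 (hf0 _))
    have hgi0 : g i0 = 0 := by
      simp only [hg, hσ, Equiv.swap_apply_left, hj0, mul_zero, add_zero, hlam, sub_self]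
    have hsum_g : ∑ i, g i = 1 := by
      have hfs : ∑ i, f (σ i) = ∑ i, f i := Equiv.sum_comp σ f
      simp only [hg]
      rw [Finset.sum_add_distrib, Finset.sum_sub_distrib, hsum_e, ← Finset.mul_sum, hfs,
        hsum_f, Finset.sum_const, Finset.card_univ, Fintype.card_fin, nsmul_eq_mul]
      simp [hc]
    set U : Matrix (Fin n) (Fin n) ℂ := (Matrix.IsHermitian.eigenvectorUnitary hXh : Matrix (Fin n) (Fin n) ℂ) with hUdef
    have hU : U ∈ Matrix.unitaryGroup (Fin n) ℂ := (Matrix.IsHermitian.eigenvectorUnitary hXh).2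
    set V : Matrix (Fin n) (Fin n) ℂ := (Matrix.IsHermitian.eigenvectorUnitary hYh : Matrix (Fin n) (Fin n) ℂ) with hVdef
    have hV : V ∈ Matrix.unitaryGroup (Fin n) ℂ := (Matrix.IsHermitian.eigenvectorUnitary hYh).2
    set Dg : Matrix (Fin n) (Fin n) ℂ := Matrix.diagonal (fun i => ((g i : ℝ) : ℂ)) with hDg
    set Y' : Matrix (Fin n) (Fin n) ℂ := U * Dg * star U with hY'
    have hDgpsd : Dg.PosSemidef :=
      Matrix.posSemidef_diagonal_iff.mpr fun i => by
        exact_mod_cast Complex.zero_le_real.mpr (hg0 i)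
    have hY'psd : Y'.PosSemidef := by
      have := hDgpsd.mul_mul_conjTranspose_same U
      rwa [← Matrix.star_eq_conjTranspose] at this
    have hY'tr : Y'.trace = 1 := by
      rw [hY', aux_trace_conj _ _ hU, Matrix.trace_diagonal]
      rw [← Complex.ofReal_sum, hsum_g, Complex.ofReal_one]
    have hdetU : IsUnit U.det ∧ IsUnit (star U).det := by
      have h1 : U * star U = 1 := Matrix.mem_unitaryGroup_iff.mp hU
      have h2 : U.det * (star U).det = 1 := by rw [← Matrix.det_mul, h1, Matrix.det_one]
      exact ⟨IsUnit.of_mul_eq_one _ h2, IsUnit.of_mul_eq_one _ (by rwa [mul_comm] at h2)⟩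
    have hY'rank : Y'.rank ≤ n - 1 := by
      rw [hY', Matrix.rank_mul_eq_left_of_isUnit_det _ _ hdetU.2,
        Matrix.rank_mul_eq_right_of_isUnit_det _ _ hdetU.1, hDg, Matrix.rank_diagonal]
      have hlt : Fintype.card {i // ((g i : ℝ) : ℂ) ≠ 0} < Fintype.card (Fin n) :=
        Fintype.card_subtype_lt (x := i0) (by simp [hgi0])
      rw [Fintype.card_fin] at hlt
      omega
    -- the norm computation
    have hXdec : X = U * Matrix.diagonal (fun i => ((e i : ℝ) : ℂ)) * star U := by
      have := hXh.spectral_theorem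
      rw [Unitary.conjStarAlgAut_apply] at this
      convert this using 3 <;> rfl
    have hdiff : X - Y' = (c : ℂ) • (U * Matrix.diagonal
        (fun i => ((1 / n - f (σ i) : ℝ) : ℂ)) * star U) := by
      have hn0 : (n : ℝ) ≠ 0 := Nat.cast_ne_zero.mpr (by omega)
      have hent : (fun i => ((e i : ℝ) : ℂ) - ((g i : ℝ) : ℂ))
          = (c : ℂ) • fun i => ((1 / n - f (σ i) : ℝ) : ℂ) := by
        funext i
        rw [Pi.smul_apply, smul_eq_mul, ← Complex.ofReal_sub, ← Complex.ofReal_mul]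
        congr 1
        simp only [hg]
        field_simp [hc]
        ring
      calc X - Y' = U * (Matrix.diagonal (fun i => ((e i : ℝ) : ℂ)) - Dg) * star U := by
            rw [hXdec, hY', ← Matrix.sub_mul, ← Matrix.mul_sub]
      _ = U * ((c : ℂ) • Matrix.diagonal (fun i => ((1 / n - f (σ i) : ℝ) : ℂ))) * star U := by
            rw [hDg, Matrix.diagonal_sub]
            congr 2
            rw [← Matrix.diagonal_smul]
            exact congrArg Matrix.diagonal hent
      _ = (c : ℂ) • (U * Matrix.diagonal (fun i => ((1 / n - f (σ i) : ℝ) : ℂ)) * star U) := by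
            rw [Matrix.mul_smul, Matrix.smul_mul]
    have hstep1 : N (X - Y') = c * N (Matrix.diagonal
        (fun i => ((1 / n - f (σ i) : ℝ) : ℂ))) := by
      rw [hdiff, hN_smul]
      have hcongr : N (U * Matrix.diagonal (fun i => ((1 / n - f (σ i) : ℝ) : ℂ)) * star U)
          = N (Matrix.diagonal (fun i => ((1 / n - f (σ i) : ℝ) : ℂ))) := by
        have := hN_usi (Matrix.diagonal (fun i => ((1 / n - f (σ i) : ℝ) : ℂ))) (star U)
          (Unitary.star_mem hU)
        rwa [← Matrix.star_eq_conjTranspose, star_star] at this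
      rw [hcongr, Complex.norm_real, Real.norm_eq_abs, abs_of_nonneg hc0]
    have hperm : N (Matrix.diagonal (fun i => ((1 / n - f (σ i) : ℝ) : ℂ)))
        = N (Matrix.diagonal (fun i => ((1 / n - f i : ℝ) : ℂ))) := by
      have h1 := hN_usi (Matrix.diagonal (fun i => ((1 / n - f i : ℝ) : ℂ)))
        ((Equiv.toPEquiv σ).toMatrix) (aux_perm_mem σ)
      rw [aux_perm_conj] at h1
      rw [← h1]
      congr 1
    have hfinal : N (Matrix.diagonal (fun i => ((1 / n - f i : ℝ) : ℂ)))
        = N ((1 / (n : ℂ)) • 1 - Y) := by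
      have h1 := hN_usi ((1 / (n : ℂ)) • 1 - Y) V hV
      rw [← h1]
      rw [← Matrix.star_eq_conjTranspose, Matrix.mul_sub, Matrix.sub_mul]
      have h2 : star V * ((1 / (n : ℂ)) • 1) * V = (1 / (n : ℂ)) • 1 := by
        rw [Matrix.mul_smul, Matrix.mul_one, Matrix.smul_mul,
          Matrix.mem_unitaryGroup_iff'.mp hV]
      have h3 : star V * Y * V = Matrix.diagonal (fun i => ((f i : ℝ) : ℂ)) := by
        have := hYh.conjStarAlgAut_star_eigenvectorUnitary
        rw [Unitary.conjStarAlgAut_star_apply] at this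
        convert this using 3 <;> rfl
      rw [h2, h3]
      rw [Matrix.smul_one_eq_diagonal, Matrix.diagonal_sub]
      congr 1
      funext i
      push_cast
      ring
    have hle : N (X - Y') ≤ N ((1 / (n : ℂ)) • 1 - Y) := by
      rw [hstep1, hperm, hfinal]
      calc c * N ((1 / (n : ℂ)) • 1 - Y) ≤ 1 * N ((1 / (n : ℂ)) • 1 - Y) :=
        mul_le_mul_of_nonneg_right hc1 (hNnonneg _)
      _ = N ((1 / (n : ℂ)) • 1 - Y) := one_mul _
    exact le_trans (csInf_le hbdd ⟨Y', ⟨hY'psd, hY'tr⟩, hY'rank, rfl⟩) hle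
  · have h1 : {t | ∃ Y : Matrix (Fin n) (Fin n) ℂ, IsDensity Y ∧ Y.rank ≤ n - 1 ∧
        t = N (X - Y)} = ∅ := by
      ext t; simp only [Set.mem_setOf_eq, Set.mem_empty_iff_false, iff_false]
      rintro ⟨Y, hY1, hY2, -⟩; exact hE ⟨Y, hY1, hY2⟩
    have h2 : {t | ∃ Y : Matrix (Fin n) (Fin n) ℂ, IsDensity Y ∧ Y.rank ≤ n - 1 ∧
        t = N ((1 / (n : ℂ)) • 1 - Y)} = ∅ := by
      ext t; simp only [Set.mem_setOf_eq, Set.mem_empty_iff_false, iff_false]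
      rintro ⟨Y, hY1, hY2, -⟩; exact hE ⟨Y, hY1, hY2⟩
    unfold distToLowRank
    rw [h1, h2]
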